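/- For every m ≥ 0, the A^0-module Hom_{A^0}(A^m, A^0) of A^0-linear maps from A^m to A^0 is isomorphic as an A^0-module to A^0 if m is even, and to A^1 if m is odd. -/

import Mathlib

open MvPolynomial

noncomputable def permAction (n : ℕ) (k : Type*) [CommSemiring k] (σ : Equiv.Perm (Fin n)) :
    MvPolynomial (Fin n ⊕ Fin n) k →ₐ[k] MvPolynomial (Fin n ⊕ Fin n) k :=
  MvPolynomial.rename (Sum.map σ σ)

noncomputable def A0 (n : ℕ) (k : Type*) [CommSemiring k] :
    Subalgebra k (MvPolynomial (Fin n ⊕ Fin n) k) :=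
  ⨅ σ : Equiv.Perm (Fin n), AlgHom.equalizer (permAction n k σ) (AlgHom.id k _)

lemma mem_A0 (n : ℕ) (k : Type*) [CommSemiring k] (p : MvPolynomial (Fin n ⊕ Fin n) k) :
    p ∈ A0 n k ↔ ∀ σ : Equiv.Perm (Fin n), permAction n k σ p = p := by
  simp [A0, Algebra.mem_iInf, AlgHom.mem_equalizer]

noncomputable def A1 (n : ℕ) (k : Type*) [CommRing k] :
    Submodule (A0 n k) (MvPolynomial (Fin n ⊕ Fin n) k) where
  carrier := {p | ∀ σ : Equiv.Perm (Fin n),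
    permAction n k σ p = (Equiv.Perm.sign σ : ℤ) • p}
  add_mem' := by
    intro a b ha hb σ
    simp [map_add, ha σ, hb σ, smul_add]
  zero_mem' := by intro σ; simp
  smul_mem' := by
    intro c p hp σ
    have hc : permAction n k σ (algebraMap (A0 n k) _ c) = algebraMap (A0 n k) _ c :=
      (mem_A0 n k c).1 c.2 σ
    rw [Algebra.smul_def, map_mul, hp σ, hc]
    exact mul_smul_comm (Equiv.Perm.sign σ : ℤ) (algebraMap (A0 n k) _ c) p

noncomputable def Am (n : ℕ) (k : Type*) [CommRing k] (m : ℕ) :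
    Submodule (A0 n k) (MvPolynomial (Fin n ⊕ Fin n) k) :=
  Submodule.span (A0 n k)
    {q | ∃ p : Fin m → MvPolynomial (Fin n ⊕ Fin n) k,
      (∀ i, p i ∈ A1 n k) ∧ q = ∏ i, p i}

set_option synthInstance.maxHeartbeats 1000000
set_option maxHeartbeats 2000000

section Auxiliary

open Equiv

variable (n : ℕ) (k : Type*)

/-- Sign-semi-invariants of weight `m`. -/
noncomputable def Esgn [CommRing k] (m : ℕ) :
    Submodule (A0 n k) (MvPolynomial (Fin n ⊕ Fin n) k) where
  carrier := {p | ∀ σ : Equiv.Perm (Fin n),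
    permAction n k σ p = ((Equiv.Perm.sign σ : ℤ) ^ m) • p}
  add_mem' := by
    intro a b ha hb σ
    simp [map_add, ha σ, hb σ, smul_add]
  zero_mem' := by intro σ; simp
  smul_mem' := by
    intro c p hp σ
    have hc : permAction n k σ (algebraMap (A0 n k) _ c) = algebraMap (A0 n k) _ c :=
      (mem_A0 n k c).1 c.2 σ
    rw [Algebra.smul_def, map_mul, hp σ, hc]
    exact mul_smul_comm _ (algebraMap (A0 n k) _ c) p

variable {n k}

lemma mem_Esgn [CommRing k] {m : ℕ} {p : MvPolynomial (Fin n ⊕ Fin n) k} :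
    p ∈ Esgn n k m ↔ ∀ σ : Equiv.Perm (Fin n),
      permAction n k σ p = ((Equiv.Perm.sign σ : ℤ) ^ m) • p := Iff.rfl

lemma mem_A1' [CommRing k] {p : MvPolynomial (Fin n ⊕ Fin n) k} :
    p ∈ A1 n k ↔ ∀ σ : Equiv.Perm (Fin n),
      permAction n k σ p = (Equiv.Perm.sign σ : ℤ) • p := Iff.rfl

lemma sign_pow_mul_self (m : ℕ) (σ : Equiv.Perm (Fin n)) :
    ((Equiv.Perm.sign σ : ℤ) ^ m) * ((Equiv.Perm.sign σ : ℤ) ^ m) = 1 := by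
  rw [← mul_pow]
  rcases Int.isUnit_iff.mp (Equiv.Perm.sign σ).isUnit with h | h <;> rw [h] <;> norm_num

lemma Esgn_even [CommRing k] {m : ℕ} (hm : Even m) : Esgn n k m = Esgn n k 0 := by
  ext p
  rw [mem_Esgn, mem_Esgn]
  have : ∀ σ : Equiv.Perm (Fin n), ((Equiv.Perm.sign σ : ℤ) ^ m) = (Equiv.Perm.sign σ : ℤ) ^ 0 := by
    intro σ
    rcases Int.isUnit_iff.mp (Equiv.Perm.sign σ).isUnit with h | h <;>
      rw [h, pow_zero] <;> [exact one_pow m; exact hm.neg_one_pow]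
  exact ⟨fun H σ => by rw [H σ, this σ], fun H σ => by rw [H σ, this σ]⟩

lemma Esgn_odd [CommRing k] {m : ℕ} (hm : Odd m) : Esgn n k m = A1 n k := by
  ext p
  rw [mem_Esgn, mem_A1']
  have : ∀ σ : Equiv.Perm (Fin n), ((Equiv.Perm.sign σ : ℤ) ^ m) = (Equiv.Perm.sign σ : ℤ) := by
    intro σ
    rcases Int.isUnit_iff.mp (Equiv.Perm.sign σ).isUnit with h | h <;>
      rw [h] <;> [exact one_pow m; exact hm.neg_one_pow]
  exact ⟨fun H σ => by rw [H σ, this σ], fun H σ => by rw [H σ, this σ]⟩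

end Auxiliary
section Auxiliary2

variable {n : ℕ} {k : Type*}

lemma prod_mem_Esgn [CommRing k] {ι : Type*} (s : Finset ι)
    (p : ι → MvPolynomial (Fin n ⊕ Fin n) k)
    (hp : ∀ i ∈ s, p i ∈ A1 n k) : (∏ i ∈ s, p i) ∈ Esgn n k s.card := by
  induction s using Finset.cons_induction with
  | empty => intro σ; simp
  | cons a s ha ih =>
    intro σ
    have h1 := (mem_A1'.mp (hp a (Finset.mem_cons_self a s))) σ
    have h2 := (ih (fun i hi => hp i (Finset.mem_cons_of_mem hi))) σ
    rw [Finset.prod_cons, map_mul, h1, h2, Finset.card_cons,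
      zsmul_eq_mul, zsmul_eq_mul, zsmul_eq_mul]
    push_cast
    ring

lemma Am_le_Esgn [CommRing k] (m : ℕ) : Am n k m ≤ Esgn n k m := by
  rw [Am, Submodule.span_le]
  rintro q ⟨p, hp, rfl⟩
  have := prod_mem_Esgn Finset.univ p (fun i _ => hp i)
  simpa using this

lemma Esgn_mul_mem [CommRing k] {m : ℕ} {x y : MvPolynomial (Fin n ⊕ Fin n) k}
    (hx : x ∈ Esgn n k m) (hy : y ∈ Esgn n k m) : x * y ∈ A0 n k := by
  rw [mem_A0]
  intro σ
  rw [map_mul, mem_Esgn.mp hx σ, mem_Esgn.mp hy σ, zsmul_eq_mul, zsmul_eq_mul,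
    show ∀ c u v : MvPolynomial (Fin n ⊕ Fin n) k, (c * u) * (c * v) = (c * c) * (u * v)
      from fun c u v => by ring,
    ← Int.cast_mul, sign_pow_mul_self, Int.cast_one, one_mul]

end Auxiliary2

section Vandermonde

variable (n : ℕ) (k : Type*)

noncomputable def dX [CommRing k] : MvPolynomial (Fin n ⊕ Fin n) k :=
  (Matrix.vandermonde fun i : Fin n => (X (Sum.inl i) : MvPolynomial (Fin n ⊕ Fin n) k)).det

noncomputable def dY [CommRing k] : MvPolynomial (Fin n ⊕ Fin n) k :=
  (Matrix.vandermonde fun i : Fin n => (X (Sum.inr i) : MvPolynomial (Fin n ⊕ Fin n) k)).det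

variable {n k}

lemma dX_mem_A1 [CommRing k] : dX n k ∈ A1 n k := by
  rw [mem_A1']
  intro σ
  rw [dX, show permAction n k σ ((Matrix.vandermonde fun i : Fin n =>
        (X (Sum.inl i) : MvPolynomial (Fin n ⊕ Fin n) k)).det)
      = ((Matrix.vandermonde fun i : Fin n =>
        (X (Sum.inl i) : MvPolynomial (Fin n ⊕ Fin n) k)).map (permAction n k σ)).det
      from (permAction n k σ).toRingHom.map_det _]
  have hmap : (Matrix.vandermonde fun i : Fin n =>
        (X (Sum.inl i) : MvPolynomial (Fin n ⊕ Fin n) k)).map (permAction n k σ)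
      = (Matrix.vandermonde fun i : Fin n =>
        (X (Sum.inl i) : MvPolynomial (Fin n ⊕ Fin n) k)).submatrix σ id := by
    ext i j
    simp [Matrix.map_apply, Matrix.vandermonde, permAction, rename_X]
  rw [hmap, Matrix.det_permute, zsmul_eq_mul]

lemma dY_mem_A1 [CommRing k] : dY n k ∈ A1 n k := by
  rw [mem_A1']
  intro σ
  rw [dY, show permAction n k σ ((Matrix.vandermonde fun i : Fin n =>
        (X (Sum.inr i) : MvPolynomial (Fin n ⊕ Fin n) k)).det)
      = ((Matrix.vandermonde fun i : Fin n =>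
        (X (Sum.inr i) : MvPolynomial (Fin n ⊕ Fin n) k)).map (permAction n k σ)).det
      from (permAction n k σ).toRingHom.map_det _]
  have hmap : (Matrix.vandermonde fun i : Fin n =>
        (X (Sum.inr i) : MvPolynomial (Fin n ⊕ Fin n) k)).map (permAction n k σ)
      = (Matrix.vandermonde fun i : Fin n =>
        (X (Sum.inr i) : MvPolynomial (Fin n ⊕ Fin n) k)).submatrix σ id := by
    ext i j
    simp [Matrix.map_apply, Matrix.vandermonde, permAction, rename_X]
  rw [hmap, Matrix.det_permute, zsmul_eq_mul]

lemma dX_ne_zero [Field k] : dX n k ≠ 0 := by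
  rw [dX, Ne, Matrix.det_vandermonde_eq_zero_iff]
  rintro ⟨i, j, hij, hne⟩
  exact hne (Sum.inl_injective (X_injective hij))

lemma dY_ne_zero [Field k] : dY n k ≠ 0 := by
  rw [dY, Ne, Matrix.det_vandermonde_eq_zero_iff]
  rintro ⟨i, j, hij, hne⟩
  exact hne (Sum.inr_injective (X_injective hij))

lemma prime_X_sub_X [Field k] {σ : Type*} {i j : σ} (h : j ≠ i) :
    Prime (X i - X j : MvPolynomial σ k) := by
  classical
  let e := (renameEquiv k (Equiv.optionSubtypeNe i).symm).trans
      (optionEquivLeft k {b : σ // b ≠ i})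
  rw [← MulEquiv.prime_iff e.toMulEquiv]
  have he : e (X i - X j) = Polynomial.X - Polynomial.C (X ⟨j, h⟩) := by
    simp [e, Equiv.optionSubtypeNe_symm_self, Equiv.optionSubtypeNe_symm_of_ne h,
      optionEquivLeft_X_none, optionEquivLeft_X_some]
  rw [show (e.toMulEquiv) (X i - X j) = e (X i - X j) from rfl, he]
  exact Polynomial.prime_X_sub_C _

lemma irreducible_isRelPrime_of_not_dvd {α : Type*} [CommMonoidWithZero α] {p q : α}
    (hp : Irreducible p) (h : ¬ p ∣ q) : IsRelPrime p q := by
  intro d hdp hdq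
  obtain ⟨e, rfl⟩ := hdp
  rcases hp.isUnit_or_isUnit rfl with hu | hu
  · exact hu
  · exact absurd (((hu.mul_right_dvd (a := d) (b := d)).mpr dvd_rfl).trans hdq) h

lemma not_dvd_X_sub_X [Field k] {a b c d : Fin n} (hcd : c ≠ d) :
    ¬ (X (Sum.inl a) - X (Sum.inl b) : MvPolynomial (Fin n ⊕ Fin n) k)
      ∣ (X (Sum.inr c) - X (Sum.inr d)) := by
  intro hdvd
  have := map_dvd (aeval (R := k)
    (Sum.elim (fun _ : Fin n => (0 : MvPolynomial (Fin n ⊕ Fin n) k))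
      (fun t : Fin n => X (Sum.inr t)))) hdvd
  simp only [map_sub, aeval_X, Sum.elim_inl, Sum.elim_inr, sub_self, zero_dvd_iff,
    sub_eq_zero] at this
  exact hcd (Sum.inr_injective (X_injective this))

lemma isRelPrime_dX_dY [Field k] : IsRelPrime (dX n k) (dY n k) := by
  rw [dX, dY, Matrix.det_vandermonde, Matrix.det_vandermonde]
  refine IsRelPrime.prod_left fun i _ => IsRelPrime.prod_left fun j hj =>
    IsRelPrime.prod_right fun a _ => IsRelPrime.prod_right fun b hb => ?_
  have hji : (j : Fin n) ≠ i := (Finset.mem_Ioi.mp hj).ne'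
  have hba : (b : Fin n) ≠ a := (Finset.mem_Ioi.mp hb).ne'
  exact irreducible_isRelPrime_of_not_dvd
    (prime_X_sub_X (k := k) (by simpa using hji.symm)).irreducible
    (not_dvd_X_sub_X hba)

lemma dX_pow_mem_Am [CommRing k] (m : ℕ) : dX n k ^ m ∈ Am n k m :=
  Submodule.subset_span ⟨fun _ => dX n k, fun _ => dX_mem_A1,
    by simp [Finset.prod_const]⟩

lemma dY_pow_mem_Am [CommRing k] (m : ℕ) : dY n k ^ m ∈ Am n k m :=
  Submodule.subset_span ⟨fun _ => dY n k, fun _ => dY_mem_A1,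
    by simp [Finset.prod_const]⟩

end Vandermonde
section Main

variable {n : ℕ} {k : Type*}

/-- Multiplication by a weight-`m` semi-invariant gives a linear functional on `Aᵐ`. -/
noncomputable def Phi [Field k] (m : ℕ) :
    ↥(Esgn n k m) →ₗ[↥(A0 n k)]
      (↥(Am n k m) →ₗ[↥(A0 n k)] ↥(A0 n k)) where
  toFun c :=
    { toFun := fun p => ⟨(c : MvPolynomial (Fin n ⊕ Fin n) k) * (p : MvPolynomial (Fin n ⊕ Fin n) k),
        Esgn_mul_mem c.2 (Am_le_Esgn m p.2)⟩
      map_add' := fun p q => Subtype.ext (by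
        show (c : MvPolynomial (Fin n ⊕ Fin n) k) * ((p : MvPolynomial (Fin n ⊕ Fin n) k) + q) = _
        rw [mul_add]; rfl)
      map_smul' := fun a p => Subtype.ext (by
        show (c : MvPolynomial (Fin n ⊕ Fin n) k) * ((a : MvPolynomial (Fin n ⊕ Fin n) k) * p)
          = (a : MvPolynomial (Fin n ⊕ Fin n) k) * ((c : MvPolynomial (Fin n ⊕ Fin n) k) * p)
        ring) }
  map_add' := fun c d => LinearMap.ext fun p => Subtype.ext (by
    show ((c : MvPolynomial (Fin n ⊕ Fin n) k) + d) * p = _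
    rw [add_mul]; rfl)
  map_smul' := fun a c => LinearMap.ext fun p => Subtype.ext (by
    show ((a : MvPolynomial (Fin n ⊕ Fin n) k) * c) * p
      = (a : MvPolynomial (Fin n ⊕ Fin n) k) * ((c : MvPolynomial (Fin n ⊕ Fin n) k) * p)
    ring)

lemma Phi_bijective [Field k] (m : ℕ) : Function.Bijective (Phi (n := n) (k := k) m) := by
  have hDx0 : (dX n k ^ m : MvPolynomial (Fin n ⊕ Fin n) k) ≠ 0 := pow_ne_zero m dX_ne_zero
  constructor
  · intro c d h
    have h1 : (c : MvPolynomial (Fin n ⊕ Fin n) k) * (dX n k ^ m)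
        = (d : MvPolynomial (Fin n ⊕ Fin n) k) * (dX n k ^ m) :=
      congrArg (fun f => ((f ⟨dX n k ^ m, dX_pow_mem_Am m⟩ : ↥(A0 n k)) :
        MvPolynomial (Fin n ⊕ Fin n) k)) h
    exact Subtype.ext (mul_right_cancel₀ hDx0 h1)
  · intro f
    set R := MvPolynomial (Fin n ⊕ Fin n) k
    set Dx : R := dX n k ^ m with hDxdef
    set Dy : R := dY n k ^ m with hDydef
    have hDx : Dx ∈ Am n k m := dX_pow_mem_Am m
    have hDy : Dy ∈ Am n k m := dY_pow_mem_Am m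
    have hDxE : Dx ∈ Esgn n k m := Am_le_Esgn m hDx
    have hDyE : Dy ∈ Esgn n k m := Am_le_Esgn m hDy
    set a : R := ((f ⟨Dx, hDx⟩ : ↥(A0 n k)) : R) with ha
    have haA0 : a ∈ A0 n k := (f ⟨Dx, hDx⟩).2
    -- master identity
    have master : ∀ p : ↥(Am n k m), (Dx * Dx) * ((f p : ↥(A0 n k)) : R) = ((p : R) * Dx) * a := by
      intro p
      have hsq : Dx * Dx ∈ A0 n k := Esgn_mul_mem hDxE hDxE
      have hsp : (p : R) * Dx ∈ A0 n k := Esgn_mul_mem (Am_le_Esgn m p.2) hDxE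
      have e1 : (⟨Dx * Dx, hsq⟩ : ↥(A0 n k)) • p
          = (⟨(p : R) * Dx, hsp⟩ : ↥(A0 n k)) • (⟨Dx, hDx⟩ : ↥(Am n k m)) := by
        apply Subtype.ext
        show (Dx * Dx) * (p : R) = ((p : R) * Dx) * Dx
        ring
      have e2 := congrArg f e1
      rw [map_smul, map_smul] at e2
      exact congrArg Subtype.val e2
    -- divisibility
    have hdvd : Dx ∣ a := by
      have h1 := master ⟨Dy, hDy⟩
      have h2 : Dx * (Dx * ((f ⟨Dy, hDy⟩ : ↥(A0 n k)) : R)) = Dx * (Dy * a) := by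
        rw [← mul_assoc, h1]; ring
      have h3 : Dx * ((f ⟨Dy, hDy⟩ : ↥(A0 n k)) : R) = Dy * a := mul_left_cancel₀ hDx0 h2
      exact (isRelPrime_dX_dY.pow (m := m) (n := m)).dvd_of_dvd_mul_right
        ⟨((f ⟨Dy, hDy⟩ : ↥(A0 n k)) : R), by linear_combination -h3⟩
    obtain ⟨c, hc⟩ := hdvd
    -- c is a weight-m semi-invariant
    have hcE : c ∈ Esgn n k m := by
      rw [mem_Esgn]
      intro σ
      have h1 : permAction n k σ a = a := (mem_A0 n k a).1 haA0 σ
      have h2 : permAction n k σ Dx = (((Equiv.Perm.sign σ : ℤ) ^ m : ℤ) : R) * Dx := by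
        have := mem_Esgn.mp hDxE σ
        rwa [zsmul_eq_mul] at this
      have h3 : Dx * c = (((Equiv.Perm.sign σ : ℤ) ^ m : ℤ) : R) * Dx * permAction n k σ c := by
        calc Dx * c = a := hc.symm
          _ = permAction n k σ a := h1.symm
          _ = permAction n k σ (Dx * c) := by rw [hc]
          _ = permAction n k σ Dx * permAction n k σ c := map_mul _ _ _
          _ = _ := by rw [h2]
      have h4 : Dx * ((((Equiv.Perm.sign σ : ℤ) ^ m : ℤ) : R) * permAction n k σ c) = Dx * c := by
        rw [show Dx * ((((Equiv.Perm.sign σ : ℤ) ^ m : ℤ) : R) * permAction n k σ c)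
          = (((Equiv.Perm.sign σ : ℤ) ^ m : ℤ) : R) * Dx * permAction n k σ c from by ring, ← h3]
      have h5 : (((Equiv.Perm.sign σ : ℤ) ^ m : ℤ) : R) * permAction n k σ c = c :=
        mul_left_cancel₀ hDx0 h4
      rw [zsmul_eq_mul]
      calc permAction n k σ c
          = ((((Equiv.Perm.sign σ : ℤ) ^ m * ((Equiv.Perm.sign σ : ℤ) ^ m) : ℤ)) : R)
            * permAction n k σ c := by rw [sign_pow_mul_self]; norm_num
        _ = (((Equiv.Perm.sign σ : ℤ) ^ m : ℤ) : R)
            * ((((Equiv.Perm.sign σ : ℤ) ^ m : ℤ) : R) * permAction n k σ c) := by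
            push_cast; ring
        _ = (((Equiv.Perm.sign σ : ℤ) ^ m : ℤ) : R) * c := by rw [h5]
    refine ⟨⟨c, hcE⟩, ?_⟩
    apply LinearMap.ext
    intro p
    apply Subtype.ext
    show c * (p : R) = ((f p : ↥(A0 n k)) : R)
    have h1 := master p
    rw [hc] at h1
    have h2 : (Dx * Dx) * ((f p : ↥(A0 n k)) : R) = (Dx * Dx) * (c * (p : R)) := by
      rw [h1]; ring
    exact (mul_left_cancel₀ (mul_ne_zero hDx0 hDx0) h2).symm

/-- `Esgn 0` is `A0` as a module over itself. -/
noncomputable def esgnZeroEquiv [Field k] :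
    ↥(Esgn n k 0) ≃ₗ[↥(A0 n k)] ↥(A0 n k) where
  toFun c := ⟨(c : MvPolynomial (Fin n ⊕ Fin n) k),
    (mem_A0 n k _).2 fun σ => by simpa using c.2 σ⟩
  invFun a := ⟨(a : MvPolynomial (Fin n ⊕ Fin n) k),
    fun σ => by simpa using (mem_A0 n k _).1 a.2 σ⟩
  left_inv c := rfl
  right_inv a := rfl
  map_add' c d := rfl
  map_smul' a c := rfl

end Main

/-- for every `m ≥ 0`, the `A⁰`-module `Hom_{A⁰}(Aᵐ, A⁰)` is isomorphic as
an `A⁰`-module to `A⁰` if `m` is even, and to `A¹` if `m` is odd. -/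
theorem dual_Am (k : Type*) [Field k] [IsAlgClosed k] [CharZero k]
    (n : ℕ) (hn : 1 ≤ n) (m : ℕ) :
    (Even m → Nonempty
      ((↥(Am n k m) →ₗ[↥(A0 n k)] ↥(A0 n k)) ≃ₗ[↥(A0 n k)] ↥(A0 n k))) ∧
    (Odd m → Nonempty
      ((↥(Am n k m) →ₗ[↥(A0 n k)] ↥(A0 n k)) ≃ₗ[↥(A0 n k)] ↥(A1 n k))) := by
  constructor
  · intro hm
    have e := LinearEquiv.ofBijective (Phi (n := n) (k := k) m) (Phi_bijective m)
    exact ⟨e.symm.trans ((LinearEquiv.ofEq _ _ (Esgn_even hm)).trans esgnZeroEquiv)⟩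
  · intro hm
    have e := LinearEquiv.ofBijective (Phi (n := n) (k := k) m) (Phi_bijective m)
    exact ⟨e.symm.trans (LinearEquiv.ofEq _ _ (Esgn_odd hm))⟩
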